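/- Let (Ω, F, P) be a probability space, X : Ω → [0,∞) a random variable, and let a ≥ 0 and λ > 0 be constants such that P(X > r) ≤ 2 (1 − Φ((r − a)/λ)) for all r > a, where Φ is the standard normal cumulative distribution function. Then E[e^X] ≤ 2 exp( λ²/2 + a ); in particular e^X is integrable. -/

import Mathlib

open MeasureTheory Set

/-- The standard normal cumulative distribution function
`Φ(x) = (1/√(2π)) ∫_{-∞}^x e^{-y²/2} dy`. -/
noncomputable def stdNormalCDF (x : ℝ) : ℝ :=
  (1 / Real.sqrt (2 * Real.pi)) * ∫ y in Set.Iio x, Real.exp (-y ^ 2 / 2)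

namespace StdAux

lemma gauss_integrable : Integrable (fun y : ℝ => Real.exp (-y ^ 2 / 2)) := by
  have h := integrable_exp_neg_mul_sq (b := (1:ℝ)/2) (by norm_num)
  refine h.congr (Filter.Eventually.of_forall fun y => ?_)
  ring_nf

lemma gauss_total : (∫ y : ℝ, Real.exp (-y ^ 2 / 2)) = Real.sqrt (2 * Real.pi) := by
  have h := integral_gaussian ((1:ℝ)/2)
  have e : ∀ y : ℝ, Real.exp (-(1/2 : ℝ) * y ^ 2) = Real.exp (-y ^ 2 / 2) := by
    intro y; ring_nf
  simp_rw [e] at h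
  rw [h, show Real.pi / (1/2) = 2 * Real.pi by ring, mul_comm]

lemma gauss_nonneg (y : ℝ) : 0 ≤ Real.exp (-y ^ 2 / 2) := (Real.exp_pos _).le

lemma sqrt2pi_pos : 0 < Real.sqrt (2 * Real.pi) :=
  Real.sqrt_pos.2 (by positivity)

lemma gauss_Iio_zero : (∫ y in Iio (0:ℝ), Real.exp (-y ^ 2 / 2)) = Real.sqrt (2 * Real.pi) / 2 := by
  have hIoi : (∫ y in Ioi (0:ℝ), Real.exp (-y ^ 2 / 2))
      = ∫ y in Iic (-(0:ℝ)), Real.exp (-y ^ 2 / 2) := by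
    rw [← integral_comp_neg_Ioi]
    congr 1; funext y; ring_nf
  have hsplit := intervalIntegral.integral_Iio_add_Ici (b := (0:ℝ)) (μ := volume)
    (f := fun y : ℝ => Real.exp (-y ^ 2 / 2))
    gauss_integrable.integrableOn gauss_integrable.integrableOn
  rw [gauss_total] at hsplit
  have hIci : (∫ y in Ici (0:ℝ), Real.exp (-y ^ 2 / 2))
      = ∫ y in Ioi (0:ℝ), Real.exp (-y ^ 2 / 2) :=
    integral_Ici_eq_integral_Ioi
  have hIic : (∫ y in Iic (-(0:ℝ)), Real.exp (-y ^ 2 / 2))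
      = ∫ y in Iio (0:ℝ), Real.exp (-y ^ 2 / 2) := by
    rw [neg_zero]; exact integral_Iic_eq_integral_Iio
  rw [hIci, hIoi, hIic] at hsplit
  linarith

lemma one_sub_Phi (x : ℝ) :
    1 - stdNormalCDF x = (1 / Real.sqrt (2 * Real.pi)) * ∫ y in Ici x, Real.exp (-y ^ 2 / 2) := by
  have hsplit := intervalIntegral.integral_Iio_add_Ici (b := x) (μ := volume)
    (f := fun y : ℝ => Real.exp (-y ^ 2 / 2))
    gauss_integrable.integrableOn gauss_integrable.integrableOn
  rw [gauss_total] at hsplit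
  have h2 : (1 / Real.sqrt (2 * Real.pi)) * Real.sqrt (2 * Real.pi) = 1 := by
    field_simp
  rw [stdNormalCDF]
  have h3 : (∫ y in Ici x, Real.exp (-y ^ 2 / 2))
      = Real.sqrt (2 * Real.pi) - ∫ y in Iio x, Real.exp (-y ^ 2 / 2) := by
    linarith [hsplit]
  rw [h3, mul_sub, h2]

lemma Phi_zero : stdNormalCDF 0 = 1 / 2 := by
  rw [stdNormalCDF, gauss_Iio_zero]
  field_simp

lemma Phi_nonneg (x : ℝ) : 0 ≤ stdNormalCDF x := by
  rw [stdNormalCDF]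
  have : 0 ≤ ∫ y in Iio x, Real.exp (-y ^ 2 / 2) :=
    setIntegral_nonneg measurableSet_Iio fun y _ => gauss_nonneg y
  positivity

lemma Phi_le_one (x : ℝ) : stdNormalCDF x ≤ 1 := by
  have h := one_sub_Phi x
  have h2 : 0 ≤ ∫ y in Ici x, Real.exp (-y ^ 2 / 2) :=
    setIntegral_nonneg measurableSet_Ici fun y _ => gauss_nonneg y
  nlinarith [(one_div_pos.2 sqrt2pi_pos).le]

lemma integral_Ici_shift (u l : ℝ) :
    (∫ y in Ici u, Real.exp (-(y - l) ^ 2 / 2)) = ∫ y in Ici (u - l), Real.exp (-y ^ 2 / 2) := by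
  rw [← integral_indicator measurableSet_Ici, ← integral_indicator measurableSet_Ici]
  have h : ∀ y : ℝ, (Ici u).indicator (fun y => Real.exp (-(y - l) ^ 2 / 2)) y
      = (Ici (u - l)).indicator (fun y => Real.exp (-y ^ 2 / 2)) (y - l) := by
    intro y
    simp only [indicator_apply, mem_Ici, sub_le_sub_iff_right]
  simp_rw [h]
  exact integral_sub_right_eq_self ((Ici (u - l)).indicator fun y => Real.exp (-y ^ 2 / 2)) l

end StdAux

namespace StdAux

lemma gauss_cont : Continuous fun y : ℝ => Real.exp (-y ^ 2 / 2) := by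
  fun_prop

lemma gauss_shift_integrable (l : ℝ) :
    Integrable (fun y : ℝ => Real.exp (-(y - l) ^ 2 / 2)) := by
  have h := gauss_integrable.comp_sub_right (g := l)
  exact h

lemma lemF {l : ℝ} (hl : 0 < l) (u : ℝ) :
    Real.exp (l * u) * (1 - stdNormalCDF u)
      ≤ Real.exp (l ^ 2 / 2) * (1 - stdNormalCDF (u - l)) := by
  rw [one_sub_Phi, one_sub_Phi, ← integral_Ici_shift u l]
  have key : (∫ y in Ici u, Real.exp (l * u - l ^ 2 / 2) * Real.exp (-y ^ 2 / 2))
      ≤ ∫ y in Ici u, Real.exp (-(y - l) ^ 2 / 2) := by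
    apply setIntegral_mono_on (gauss_integrable.const_mul _).integrableOn
      (gauss_shift_integrable l).integrableOn measurableSet_Ici
    intro y hy
    rw [← Real.exp_add]
    apply Real.exp_le_exp.2
    have h1 : l * u ≤ l * y := mul_le_mul_of_nonneg_left hy hl.le
    nlinarith
  rw [integral_const_mul] at key
  have hc : (0:ℝ) < 1 / Real.sqrt (2 * Real.pi) := one_div_pos.2 sqrt2pi_pos
  have he : Real.exp (l ^ 2 / 2) * Real.exp (l * u - l ^ 2 / 2) = Real.exp (l * u) := by
    rw [← Real.exp_add]; ring_nf
  have hS : 0 ≤ ∫ y in Ici u, Real.exp (-y ^ 2 / 2) :=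
    setIntegral_nonneg measurableSet_Ici fun y _ => gauss_nonneg y
  calc Real.exp (l * u) * (1 / Real.sqrt (2 * Real.pi) * ∫ y in Ici u, Real.exp (-y ^ 2 / 2))
      = (1 / Real.sqrt (2 * Real.pi)) *
        (Real.exp (l ^ 2 / 2) * (Real.exp (l * u - l ^ 2 / 2) * ∫ y in Ici u, Real.exp (-y ^ 2 / 2))) := by
        rw [← he]; ring
    _ ≤ (1 / Real.sqrt (2 * Real.pi)) *
        (Real.exp (l ^ 2 / 2) * ∫ y in Ici u, Real.exp (-(y - l) ^ 2 / 2)) := by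
        apply mul_le_mul_of_nonneg_left _ hc.le
        exact mul_le_mul_of_nonneg_left key (Real.exp_pos _).le
    _ = Real.exp (l ^ 2 / 2) * (1 / Real.sqrt (2 * Real.pi) * ∫ y in Ici u, Real.exp (-(y - l) ^ 2 / 2)) := by
        ring

lemma hasDerivAt_Phi (x : ℝ) :
    HasDerivAt stdNormalCDF ((1 / Real.sqrt (2 * Real.pi)) * Real.exp (-x ^ 2 / 2)) x := by
  have hrep : stdNormalCDF = fun z =>
      (1 / Real.sqrt (2 * Real.pi)) *
        ((∫ y in Iic (0:ℝ), Real.exp (-y ^ 2 / 2)) + ∫ y in (0:ℝ)..z, Real.exp (-y ^ 2 / 2)) := by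
    funext z
    rw [stdNormalCDF]
    congr 1
    rw [← intervalIntegral.integral_Iic_sub_Iic gauss_integrable.integrableOn
      gauss_integrable.integrableOn, ← integral_Iic_eq_integral_Iio]
    ring
  rw [hrep]
  have hd : HasDerivAt (fun z => ∫ y in (0:ℝ)..z, Real.exp (-y ^ 2 / 2))
      (Real.exp (-x ^ 2 / 2)) x :=
    (gauss_cont.integral_hasStrictDerivAt 0 x).hasDerivAt
  exact (hd.const_add _).const_mul _

lemma Phi_cont : Continuous stdNormalCDF :=
  continuous_iff_continuousAt.2 fun x => (hasDerivAt_Phi x).continuousAt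

end StdAux

namespace StdAux

lemma hasDerivAt_H (a l : ℝ) (hl : 0 < l) {t : ℝ} (ht : 0 < t) :
    HasDerivAt (fun s => 2 * s * (1 - stdNormalCDF ((Real.log s - a) / l))
        + 2 * Real.exp (a + l ^ 2 / 2) * stdNormalCDF ((Real.log s - a) / l - l))
      (2 * (1 - stdNormalCDF ((Real.log t - a) / l))) t := by
  have hu : HasDerivAt (fun s : ℝ => (Real.log s - a) / l) (t⁻¹ / l) t :=
    ((Real.hasDerivAt_log ht.ne').sub_const a).div_const l
  have h1 : HasDerivAt (fun s => stdNormalCDF ((Real.log s - a) / l))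
      ((1 / Real.sqrt (2 * Real.pi)) * Real.exp (-((Real.log t - a) / l) ^ 2 / 2) * (t⁻¹ / l)) t :=
    (hasDerivAt_Phi _).comp t hu
  have h2 : HasDerivAt (fun s => stdNormalCDF ((Real.log s - a) / l - l))
      ((1 / Real.sqrt (2 * Real.pi)) * Real.exp (-((Real.log t - a) / l - l) ^ 2 / 2) * (t⁻¹ / l)) t :=
    (hasDerivAt_Phi _).comp t (hu.sub_const l)
  have hmul := ((hasDerivAt_id t).const_mul 2).mul ((hasDerivAt_const t 1).sub h1)
  have hsum := hmul.add (h2.const_mul (2 * Real.exp (a + l ^ 2 / 2)))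
  have key : Real.exp (a + l ^ 2 / 2) * Real.exp (-((Real.log t - a) / l - l) ^ 2 / 2)
      = t * Real.exp (-((Real.log t - a) / l) ^ 2 / 2) := by
    nth_rewrite 2 [← Real.exp_log ht]
    rw [← Real.exp_add, ← Real.exp_add]
    congr 1
    field_simp
    ring
  refine hsum.congr_deriv (Eq.symm ?_)
  simp only [id_eq, Pi.sub_apply]
  linear_combination (-(2 * (1 / Real.sqrt (2 * Real.pi)) * t⁻¹ / l)) * key

end StdAux

open StdAux

/-- If `X ≥ 0` satisfies the Gaussian-type tail bound
`P(X > r) ≤ 2(1 - stdNormalCDF((r-a)/λ))` for all `r > a` (with `a ≥ 0`, `λ > 0`), then `e^X` is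
integrable and `E[e^X] ≤ 2 exp(λ²/2 + a)`. -/
theorem stmt_7 {Ω : Type*} [MeasurableSpace Ω] (P : Measure Ω) [IsProbabilityMeasure P]
    (X : Ω → ℝ) (hXmeas : Measurable X) (hX0 : ∀ ω, 0 ≤ X ω)
    (a l : ℝ) (ha : 0 ≤ a) (hl : 0 < l)
    (htail : ∀ r > a, (P {ω | r < X ω}).toReal ≤ 2 * (1 - stdNormalCDF ((r - a) / l))) :
    Integrable (fun ω => Real.exp (X ω)) P ∧
    ∫ ω, Real.exp (X ω) ∂P ≤ 2 * Real.exp (l ^ 2 / 2 + a) := by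
  set A := Real.exp a with hA
  have hA0 : 0 < A := Real.exp_pos a
  set C2 : ℝ := 2 * Real.exp (a + l ^ 2 / 2) with hC2
  have hAC2 : A ≤ C2 := by
    rw [hA, hC2]
    have h1 : Real.exp a ≤ Real.exp (a + l ^ 2 / 2) := Real.exp_le_exp.2 (by nlinarith)
    nlinarith [Real.exp_pos (a + l ^ 2 / 2)]
  set gb : ℝ → ℝ := fun t => 2 * (1 - stdNormalCDF ((Real.log t - a) / l)) with hgb
  have gb_nonneg : ∀ t, 0 ≤ gb t := fun t => by
    have := Phi_le_one ((Real.log t - a) / l); simp only [hgb]; linarith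
  have gmeas : Measurable gb :=
    (measurable_const.sub (Phi_cont.measurable.comp
      ((Real.measurable_log.sub measurable_const).div_const l))).const_mul 2
  -- the antiderivative
  set H : ℝ → ℝ := fun s => 2 * s * (1 - stdNormalCDF ((Real.log s - a) / l))
      + 2 * Real.exp (a + l ^ 2 / 2) * stdNormalCDF ((Real.log s - a) / l - l) with hH
  -- FTC bound
  have ftc : ∀ B, A ≤ B → (∫ t in Ioc A B, gb t) ≤ C2 - A := by
    intro B hB
    have hderiv : ∀ t ∈ uIcc A B, HasDerivAt H (gb t) t := by
      intro t htmem
      rw [uIcc_of_le hB] at htmem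
      exact hasDerivAt_H a l hl (lt_of_lt_of_le hA0 htmem.1)
    have hgbcont : ContinuousOn gb (uIcc A B) := by
      intro t htmem
      rw [uIcc_of_le hB] at htmem
      have ht0 : (0:ℝ) < t := lt_of_lt_of_le hA0 htmem.1
      have : ContinuousAt gb t := by
        have hlog : ContinuousAt (fun s : ℝ => (Real.log s - a) / l) t :=
          ((Real.continuousAt_log ht0.ne').sub continuousAt_const).div_const l
        exact (continuousAt_const.sub (Phi_cont.continuousAt.comp hlog)).const_mul 2
      exact this.continuousWithinAt
    have hgbint : IntervalIntegrable gb volume A B := hgbcont.intervalIntegrable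
    have heq : ∫ t in A..B, gb t = H B - H A :=
      intervalIntegral.integral_eq_sub_of_hasDerivAt hderiv hgbint
    rw [intervalIntegral.integral_of_le hB] at heq
    rw [heq]
    -- compute H A
    have hHA : H A = A + C2 * stdNormalCDF (-l) := by
      simp only [hH, hA, Real.log_exp, sub_self, zero_div, Phi_zero, hC2, zero_sub]
      ring
    -- bound H B
    have hHB : H B ≤ C2 := by
      set u := (Real.log B - a) / l with hu
      have hB0 : 0 < B := lt_of_lt_of_le hA0 hB
      have hBe : B = Real.exp a * Real.exp (l * u) := by
        rw [← Real.exp_add, hu]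
        rw [show a + l * ((Real.log B - a) / l) = Real.log B by field_simp; ring, Real.exp_log hB0]
      have hF := lemF hl u
      have hkey : 2 * B * (1 - stdNormalCDF u)
          ≤ C2 * (1 - stdNormalCDF (u - l)) := by
        rw [hBe, hC2, Real.exp_add]
        nlinarith [Real.exp_pos a, hF]
      have := Phi_le_one (u - l)
      have := Phi_nonneg (u - l)
      simp only [hH]
      rw [← hu]
      nlinarith [hkey]
    rw [hHA]
    have := Phi_nonneg (-l)
    have hC2pos : 0 < C2 := lt_of_lt_of_le hA0 hAC2
    nlinarith [hHB]
  -- layer cake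
  have hXm : AEMeasurable (fun ω => Real.exp (X ω)) P :=
    (Real.measurable_exp.comp hXmeas).aemeasurable
  have layer := lintegral_eq_lintegral_meas_lt P
    (Filter.Eventually.of_forall fun ω => (Real.exp_pos (X ω)).le) hXm
  have hsetsplit : Ioi (0:ℝ) = Ioc 0 A ∪ Ioi A := (Ioc_union_Ioi_eq_Ioi hA0.le).symm
  have hsplit : (∫⁻ t in Ioi (0:ℝ), P {ω | t < Real.exp (X ω)})
      = (∫⁻ t in Ioc 0 A, P {ω | t < Real.exp (X ω)})
        + ∫⁻ t in Ioi A, P {ω | t < Real.exp (X ω)} := by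
    rw [hsetsplit, lintegral_union measurableSet_Ioi Ioc_disjoint_Ioi_same]
  have part1 : (∫⁻ t in Ioc 0 A, P {ω | t < Real.exp (X ω)}) ≤ ENNReal.ofReal A := by
    calc (∫⁻ t in Ioc 0 A, P {ω | t < Real.exp (X ω)})
        ≤ ∫⁻ _ in Ioc (0:ℝ) A, 1 :=
          setLIntegral_mono measurable_one fun t _ => prob_le_one
      _ = volume (Ioc (0:ℝ) A) := setLIntegral_one _
      _ = ENNReal.ofReal A := by rw [Real.volume_Ioc, sub_zero]
  have part2 : (∫⁻ t in Ioi A, P {ω | t < Real.exp (X ω)}) ≤ ENNReal.ofReal (C2 - A) := by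
    have step1 : (∫⁻ t in Ioi A, P {ω | t < Real.exp (X ω)})
        ≤ ∫⁻ t in Ioi A, ENNReal.ofReal (gb t) := by
      apply setLIntegral_mono gmeas.ennreal_ofReal
      intro t ht
      have ht0 : 0 < t := lt_trans hA0 ht
      have hlog : a < Real.log t := (Real.lt_log_iff_exp_lt ht0).2 ht
      have hset : {ω | t < Real.exp (X ω)} = {ω | Real.log t < X ω} := by
        ext ω; exact (Real.log_lt_iff_lt_exp ht0).symm
      rw [hset]
      calc P {ω | Real.log t < X ω}
          = ENNReal.ofReal ((P {ω | Real.log t < X ω}).toReal) :=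
            (ENNReal.ofReal_toReal (measure_ne_top P _)).symm
        _ ≤ ENNReal.ofReal (gb t) := ENNReal.ofReal_le_ofReal (htail (Real.log t) hlog)
    have step2 : (∫⁻ t in Ioi A, ENNReal.ofReal (gb t)) ≤ ENNReal.ofReal (C2 - A) := by
      set ν := volume.withDensity (fun t => ENNReal.ofReal (gb t)) with hν
      have happ : ∀ s : Set ℝ, MeasurableSet s
          → ν s = ∫⁻ t in s, ENNReal.ofReal (gb t) := fun s hs =>
        withDensity_apply _ hs
      rw [← happ _ measurableSet_Ioi]
      have hunion : Ioi A = ⋃ n : ℕ, Ioc A (A + (n + 1)) := by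
        ext t
        simp only [mem_Ioi, mem_iUnion, mem_Ioc]
        constructor
        · intro h
          obtain ⟨n, hn⟩ := exists_nat_ge (t - A)
          exact ⟨n, h, by push_cast; linarith⟩
        · rintro ⟨n, h, -⟩; exact h
      have hmono : Monotone fun n : ℕ => Ioc A (A + (n + 1)) := by
        intro m n hmn
        apply Ioc_subset_Ioc le_rfl
        have : (m:ℝ) ≤ n := Nat.cast_le.2 hmn
        linarith
      rw [hunion, hmono.measure_iUnion]
      apply iSup_le
      intro n
      rw [happ _ measurableSet_Ioc]
      have hBn : A ≤ A + ((n:ℝ) + 1) := by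
        have : (0:ℝ) ≤ (n:ℝ) := Nat.cast_nonneg n
        linarith
      have hintOn : IntegrableOn gb (Ioc A (A + ((n:ℝ) + 1))) volume := by
        have hgbcont : ContinuousOn gb (uIcc A (A + ((n:ℝ) + 1))) := by
          intro t htmem
          rw [uIcc_of_le hBn] at htmem
          have ht0 : (0:ℝ) < t := lt_of_lt_of_le hA0 htmem.1
          have hlog : ContinuousAt (fun s : ℝ => (Real.log s - a) / l) t :=
            ((Real.continuousAt_log ht0.ne').sub continuousAt_const).div_const l
          have hca : ContinuousAt gb t :=
            (continuousAt_const.sub (Phi_cont.continuousAt.comp hlog)).const_mul 2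
          exact hca.continuousWithinAt
        exact (intervalIntegrable_iff_integrableOn_Ioc_of_le hBn).1 hgbcont.intervalIntegrable
      rw [← ofReal_integral_eq_lintegral_ofReal hintOn
        (Filter.Eventually.of_forall fun t => gb_nonneg t)]
      exact ENNReal.ofReal_le_ofReal (ftc _ hBn)
    exact step1.trans step2
  have total : (∫⁻ ω, ENNReal.ofReal (Real.exp (X ω)) ∂P)
      ≤ ENNReal.ofReal (2 * Real.exp (l ^ 2 / 2 + a)) := by
    rw [layer, hsplit]
    calc (∫⁻ t in Ioc 0 A, P {ω | t < Real.exp (X ω)})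
          + ∫⁻ t in Ioi A, P {ω | t < Real.exp (X ω)}
        ≤ ENNReal.ofReal A + ENNReal.ofReal (C2 - A) := add_le_add part1 part2
      _ = ENNReal.ofReal (A + (C2 - A)) := (ENNReal.ofReal_add hA0.le (by linarith)).symm
      _ = ENNReal.ofReal (2 * Real.exp (l ^ 2 / 2 + a)) := by
          rw [hC2]; ring_nf
  have hint : Integrable (fun ω => Real.exp (X ω)) P := by
    refine ⟨hXm.aestronglyMeasurable, ?_⟩
    rw [hasFiniteIntegral_iff_ofReal (Filter.Eventually.of_forall fun ω => (Real.exp_pos (X ω)).le)]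
    exact lt_of_le_of_lt total ENNReal.ofReal_lt_top
  refine ⟨hint, ?_⟩
  rw [integral_eq_lintegral_of_nonneg_ae
    (Filter.Eventually.of_forall fun ω => (Real.exp_pos (X ω)).le) hXm.aestronglyMeasurable]
  exact ENNReal.toReal_le_of_le_ofReal (by positivity) total
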